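/- (In-weight criterion excluding the discovering vertex, Lemma 5 of the paper.) Assume that every u ∈ F admits a path from v0 to u, all of whose vertices lie in F, whose cost equals cost u. Let k ∉ F, and let z ∈ F be a vertex with E z k (the vertex from which k was discovered). If D k ≤ (⨅ {D y : y ∉ F}) + (⨅ {w v k : E v k ∧ v ≠ z}), where the second infimum is over all in-edges of k other than the one from z, then D k = cost k. -/

import Mathlib

open scoped ENNReal

variable {V : Type*}

/-- `IsPath E v0 x p` means `p` is a finite sequence of vertices starting at `v0`,
ending at `x`, with consecutive vertices joined by edges of `E`. -/
def IsPath (E : V → V → Prop) (v0 x : V) (p : List V) : Prop :=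
  p.Chain' E ∧ p.head? = some v0 ∧ p.getLast? = some x

/-- The cost of a path: the sum of the weights of its consecutive edges. -/
noncomputable def pathCost (w : V → V → ℝ≥0∞) (p : List V) : ℝ≥0∞ :=
  ((p.zip p.tail).map fun q => w q.1 q.2).sum

/-- `cost E w v0 x` : the infimum of the costs of all paths from `v0` to `x`
(`∞` if `x` is unreachable from `v0`). -/
noncomputable def cost (E : V → V → Prop) (w : V → V → ℝ≥0∞) (v0 x : V) : ℝ≥0∞ :=
  ⨅ p : {p : List V // IsPath E v0 x p}, pathCost w p.1

/-- An `F`-path from `v0` to `x` : a path all of whose vertices other than the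
final vertex `x` lie in `F`. `Dfun E w v0 F x` is the infimum of the costs of
`F`-paths from `v0` to `x` (`∞` if no `F`-path to `x` exists). -/
noncomputable def Dfun (E : V → V → Prop) (w : V → V → ℝ≥0∞) (v0 : V) (F : Set V)
    (x : V) : ℝ≥0∞ :=
  ⨅ p : {p : List V // IsPath E v0 x p ∧ ∀ v ∈ p.dropLast, v ∈ F}, pathCost w p.1

lemma pathCost_cons_cons (w : V → V → ℝ≥0∞) (a b : V) (l : List V) :
    pathCost w (a :: b :: l) = w a b + pathCost w (b :: l) := rfl

lemma pathCost_concat (w : V → V → ℝ≥0∞) : ∀ (l : List V) (a b : V),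
    pathCost w (l ++ [a, b]) = pathCost w (l ++ [a]) + w a b
  | [], a, b => by simp [pathCost]
  | [x], a, b => by simp [pathCost, add_assoc]
  | x :: y :: l, a, b => by
    have h := pathCost_concat w (y :: l) a b
    simp only [List.cons_append, pathCost_cons_cons] at h ⊢
    rw [h, add_assoc]

lemma pathCost_le_append (w : V → V → ℝ≥0∞) : ∀ (l r : List V),
    pathCost w l ≤ pathCost w (l ++ r)
  | [], r => by simp [pathCost]
  | [x], r => by simp [pathCost]
  | x :: y :: l, r => by
    simp only [List.cons_append, pathCost_cons_cons]
    exact add_le_add_right (pathCost_le_append w (y :: l) r) _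

lemma pathCost_append_last (w : V → V → ℝ≥0∞) {l : List V} (hl : l ≠ []) (b : V) :
    pathCost w (l ++ [b]) = pathCost w l + w (l.getLast hl) b := by
  have h := List.dropLast_append_getLast hl
  calc pathCost w (l ++ [b])
      = pathCost w (l.dropLast ++ [l.getLast hl, b]) := by
        rw [show l.dropLast ++ [l.getLast hl, b] = (l.dropLast ++ [l.getLast hl]) ++ [b] by simp, h]
    _ = pathCost w (l.dropLast ++ [l.getLast hl]) + w (l.getLast hl) b := pathCost_concat w _ _ _
    _ = pathCost w l + w (l.getLast hl) b := by rw [h]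

/-- In-weight criterion excluding the discovering vertex (Lemma 5): with the second
infimum over all in-edges of `k` other than the one from `z ∈ F`. -/
theorem in_weight_criterion [Fintype V] (E : V → V → Prop) (w : V → V → ℝ≥0∞)
    (hpos : ∀ u v, E u v → 0 < w u v) (hfin : ∀ u v, E u v → w u v < ⊤)
    (v0 : V) (F : Set V) (hv0 : v0 ∈ F)
    (hF : ∀ u ∈ F, ∃ p : List V, IsPath E v0 u p ∧ (∀ v ∈ p, v ∈ F) ∧
      pathCost w p = cost E w v0 u)
    (k : V) (hk : k ∉ F) (z : V) (hz : z ∈ F) (hzk : E z k)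
    (hD : Dfun E w v0 F k ≤
      (⨅ y : {y : V // y ∉ F}, Dfun E w v0 F y.1) +
      (⨅ v : {v : V // E v k ∧ v ≠ z}, w v.1 k)) :
    Dfun E w v0 F k = cost E w v0 k := by
  classical
  refine le_antisymm ?_ (le_iInf fun q => iInf_le_of_le ⟨q.1, q.2.1⟩ le_rfl)
  rw [cost]
  refine le_iInf fun ⟨p, hchain, hhead, hlast⟩ => ?_
  -- basic structure of p
  have hpne : p ≠ [] := by rintro rfl; simp at hhead
  have hgl : p.getLast hpne = k := by
    rw [List.getLast?_eq_getLast hpne] at hlast; exact Option.some.inj hlast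
  set t := p.dropLast with ht
  have hpt : t ++ [k] = p := by rw [← hgl]; exact List.dropLast_append_getLast hpne
  have htne : t ≠ [] := by
    rintro h
    rw [h] at hpt
    rw [← hpt] at hhead
    simp at hhead
    exact hk (hhead ▸ hv0)
  set v := t.getLast htne with hv
  have hchain' : (t ++ [k]).Chain' E := hpt ▸ hchain
  have hct : t.Chain' E := hchain'.prefix ⟨[k], rfl⟩
  have hEvk : E v k := by
    rcases List.isChain_append.1 hchain' with ⟨-, -, h⟩
    exact h v (by rw [List.getLast?_eq_getLast htne]; rfl) k rfl
  have hheadt : t.head? = some v0 := by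
    rw [← hpt] at hhead
    rcases t with - | ⟨a, t'⟩
    · exact absurd rfl htne
    · simpa using hhead
  have hcostp : pathCost w p = pathCost w t + w v k := by
    rw [← hpt, pathCost_append_last w htne]
  rw [hcostp]
  by_cases hvz : v = z
  · -- last edge comes from z: use the optimal F-path to z
    obtain ⟨q, hq, hqF, hqc⟩ := hF z hz
    have hqne : q ≠ [] := by rintro rfl; simp [IsPath] at hq
    have hglq : q.getLast hqne = z := by
      have := hq.2.2; rw [List.getLast?_eq_getLast hqne] at this
      exact Option.some.inj this
    have hqk : IsPath E v0 k (q ++ [k]) ∧ ∀ x ∈ (q ++ [k]).dropLast, x ∈ F := by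
      refine ⟨⟨?_, ?_, ?_⟩, ?_⟩
      · refine List.isChain_append.2 ⟨hq.1, List.isChain_singleton k, ?_⟩
        intro a ha b hb
        rw [List.getLast?_eq_getLast hqne, hglq] at ha
        simp at ha hb
        rw [← ha, ← hb]; exact hzk
      · rcases q with - | ⟨a, q'⟩
        · exact absurd rfl hqne
        · simpa using hq.2.1
      · simp
      · intro x hx
        rw [List.dropLast_concat] at hx
        exact hqF x hx
    have h1 : Dfun E w v0 F k ≤ pathCost w q + w z k := by
      have := iInf_le (fun p : {p : List V // IsPath E v0 k p ∧ ∀ x ∈ p.dropLast, x ∈ F} =>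
        pathCost w p.1) ⟨q ++ [k], hqk⟩
      rwa [pathCost_append_last w hqne, hglq] at this
    have h2 : pathCost w q ≤ pathCost w t := by
      rw [hqc, cost]
      exact iInf_le_of_le ⟨t, hct, hheadt, by rw [List.getLast?_eq_getLast htne, ← hv, hvz]⟩ le_rfl
    calc Dfun E w v0 F k ≤ pathCost w q + w z k := h1
      _ ≤ pathCost w t + w v k := by rw [hvz]; exact add_le_add_left h2 _
  · -- last edge not from z
    by_cases hall : ∀ x ∈ t, x ∈ F
    · -- p itself is an F-path
      refine iInf_le_of_le ⟨p, ⟨hchain, hhead, hlast⟩, fun x hx => hall x (ht ▸ hx)⟩ ?_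
      rw [hcostp]
    · -- there is a vertex of t outside F
      push_neg at hall
      set t₁ := t.takeWhile (fun x => x ∈ F) with ht₁
      set t₂ := t.dropWhile (fun x => x ∈ F) with ht₂
      have htsplit : t₁ ++ t₂ = t := by rw [ht₁, ht₂]; exact List.takeWhile_append_dropWhile
      have ht₂ne : t₂ ≠ [] := by
        rintro h
        obtain ⟨x, hxt, hxF⟩ := hall
        rw [← htsplit, h, List.append_nil] at hxt
        exact hxF (by simpa using List.mem_takeWhile_imp hxt)
      set y := t₂.head ht₂ne with hy
      have hyF : y ∉ F := by
        have := List.head_dropWhile_not (fun x => decide (x ∈ F)) ht₂ne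
        simpa using this
      have ht₂c : t₂ = y :: t₂.tail := (List.cons_head_tail ht₂ne).symm
      set q := t₁ ++ [y] with hq
      have hqpre : q ++ t₂.tail = t := by rw [hq, List.append_assoc, List.singleton_append, ← ht₂c]; exact htsplit
      have hqne : q ≠ [] := by simp [hq]
      have hqpath : IsPath E v0 y q ∧ ∀ x ∈ q.dropLast, x ∈ F := by
        refine ⟨⟨?_, ?_, ?_⟩, ?_⟩
        · exact hct.prefix ⟨t₂.tail, hqpre⟩
        · have : q.head? = t.head? := by
            rw [← hqpre]
            rcases q with - | ⟨a, q'⟩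
            · exact absurd rfl hqne
            · simp
          rw [this, hheadt]
        · simp [hq]
        · intro x hx
          rw [hq, List.dropLast_concat] at hx
          have hx' : x ∈ List.takeWhile (fun a => decide (a ∈ F)) t := ht₁ ▸ hx
          have hx'' := List.mem_takeWhile_imp hx'
          exact of_decide_eq_true hx''
      have hDy : Dfun E w v0 F y ≤ pathCost w t := by
        refine le_trans (iInf_le_of_le ⟨q, hqpath⟩ le_rfl) ?_
        rw [← hqpre]; exact pathCost_le_append w q _
      calc Dfun E w v0 F k
          ≤ (⨅ y : {y : V // y ∉ F}, Dfun E w v0 F y.1) +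
            (⨅ v : {v : V // E v k ∧ v ≠ z}, w v.1 k) := hD
        _ ≤ Dfun E w v0 F y + w v k :=
            add_le_add (iInf_le_of_le ⟨y, hyF⟩ le_rfl) (iInf_le_of_le ⟨v, hEvk, hvz⟩ le_rfl)
        _ ≤ pathCost w t + w v k := add_le_add_left hDy _
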